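/- Let E be a finite set and let f : 2^E → ℤ be submodular. Then the extended polymatroid EP_f := {x ∈ ℝ^E | x(U) ≤ f(U) for all U ⊆ E} satisfies condition (★): for every nonnegative integer k, every r ∈ {0,…,k} and every integer vector w ∈ ℤ^E, the set r·EP_f ∩ (w − (k−r)·EP_f) is box-integer. -/
import Mathlib


open Finset Pointwise

variable {ι : Type*} [Fintype ι]

/-- A vector is an integer vector if each coordinate is an integer. -/
def IsIntegerVec (x : ι → ℝ) : Prop := ∀ i, ∃ z : ℤ, x i = (z : ℝ)

/-- `F` is a (nonempty, exposed) face of `P`: the set of points of `P` maximizing some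
linear functional `⟨c, ·⟩` over `P`. -/
def IsFace (P F : Set (ι → ℝ)) : Prop :=
  F.Nonempty ∧ ∃ c : ι → ℝ, F = {x ∈ P | ∀ y ∈ P, ∑ i, c i * y i ≤ ∑ i, c i * x i}

/-- `P` is an integer polyhedron: every (nonempty) face contains an integer vector. -/
def IsIntegerPolyhedron (P : Set (ι → ℝ)) : Prop :=
  ∀ F : Set (ι → ℝ), IsFace P F → ∃ x ∈ F, IsIntegerVec x

/-- `Q` is box-integer: its intersection with any integer box is an integer polyhedron. -/
def IsBoxInteger (Q : Set (ι → ℝ)) : Prop :=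
  ∀ c d : ι → ℤ, (∀ i, c i ≤ d i) →
    IsIntegerPolyhedron {x ∈ Q | ∀ i, (c i : ℝ) ≤ x i ∧ x i ≤ (d i : ℝ)}

/-- Condition (★): for all `0 ≤ r ≤ k` and integer `w`, the set `rP ∩ (w - (k-r)P)`
is box-integer. -/
def ConditionStar (P : Set (ι → ℝ)) : Prop :=
  ∀ k r : ℕ, r ≤ k → ∀ w : ι → ℤ,
    IsBoxInteger (((r : ℝ) • P) ∩
      ((fun y => (fun i => (w i : ℝ)) - y) '' (((k - r : ℕ) : ℝ) • P)))

/-- The Integer Carathéodory Property: every integer vector `w ∈ kP` is a nonnegative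
integer combination, with coefficients summing to `k`, of affinely independent integer
vectors in `P`. -/
def HasICP (P : Set (ι → ℝ)) : Prop :=
  ∀ k : ℕ, 0 < k → ∀ w : ι → ℤ, (fun i => (w i : ℝ)) ∈ (k : ℝ) • P →
    ∃ (t : ℕ) (x : Fin t → (ι → ℝ)) (c : Fin t → ℕ),
      (∀ i, x i ∈ P) ∧ (∀ i, IsIntegerVec (x i)) ∧ AffineIndependent ℝ x ∧
      (∀ i, 0 < c i) ∧ (∑ i, c i = k) ∧ (fun j => (w j : ℝ)) = ∑ i, (c i : ℝ) • x i

/-- A function on subsets of a finite set is submodular. -/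
def Submodular {E : Type*} [DecidableEq E] (f : Finset E → ℤ) : Prop :=
  ∀ A B : Finset E, f (A ∪ B) + f (A ∩ B) ≤ f A + f B

theorem aux_trivial {X : Set (ι → ℝ)} (h : ∀ x ∈ X, IsIntegerVec x) :
    IsIntegerPolyhedron X := by
  rintro F ⟨⟨x, hx⟩, c, rfl⟩
  exact ⟨x, hx, h x hx.1⟩

theorem aux_midpoint {X : Set (ι → ℝ)} (hconv : Convex ℝ X) (hcomp : IsCompact X)
    (hmid : ∀ z ∈ X, ¬ IsIntegerVec z →
      ∃ z₁ ∈ X, ∃ z₂ ∈ X, z₁ ≠ z₂ ∧ z = (2⁻¹ : ℝ) • z₁ + (2⁻¹ : ℝ) • z₂) :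
    IsIntegerPolyhedron X := by
  rintro F ⟨hne, c, rfl⟩
  set L : (ι → ℝ) → ℝ := fun x => ∑ i, c i * x i with hLdef
  have hLcont : Continuous L := by
    exact continuous_finset_sum _ fun i _ => continuous_const.mul (continuous_apply i)
  have hFeq : {x ∈ X | ∀ y ∈ X, L y ≤ L x} = X ∩ ⋂ y ∈ X, {x | L y ≤ L x} := by
    ext x
    simp only [Set.mem_setOf_eq, Set.mem_inter_iff, Set.mem_iInter]
  have hFclosed : IsClosed {x ∈ X | ∀ y ∈ X, L y ≤ L x} := by
    rw [hFeq]
    exact hcomp.isClosed.inter (isClosed_biInter fun y _ => isClosed_le continuous_const hLcont)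
  have hFcomp : IsCompact {x ∈ X | ∀ y ∈ X, L y ≤ L x} :=
    hcomp.of_isClosed_subset hFclosed (Set.sep_subset _ _)
  have hLlin : IsLinearMap ℝ L := by
    constructor
    · intro x y; simp [hLdef, mul_add, Finset.sum_add_distrib]
    · intro a x; simp [hLdef, Finset.mul_sum]; ring_nf
      exact Finset.sum_congr rfl fun i _ => by ring
  have hFconv : Convex ℝ {x ∈ X | ∀ y ∈ X, L y ≤ L x} := by
    rw [hFeq]
    exact hconv.inter (convex_iInter fun y => convex_iInter fun _ =>
      convex_halfSpace_ge hLlin (L y))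
  obtain ⟨z, hz⟩ := hFcomp.extremePoints_nonempty hne
  rw [mem_extremePoints] at hz
  obtain ⟨hzF, hzext⟩ := hz
  by_cases hint : IsIntegerVec z
  · exact ⟨z, hzF, hint⟩
  obtain ⟨z₁, hz₁, z₂, hz₂, hne12, hmidz⟩ := hmid z hzF.1 hint
  have h1 : L z₁ ≤ L z := hzF.2 z₁ hz₁
  have h2 : L z₂ ≤ L z := hzF.2 z₂ hz₂
  have hLz : L z = 2⁻¹ * L z₁ + 2⁻¹ * L z₂ := by
    rw [hmidz, hLlin.map_add, hLlin.map_smul, hLlin.map_smul]; simp [smul_eq_mul]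
  have he1 : L z₁ = L z := by linarith
  have he2 : L z₂ = L z := by linarith
  have hz₁F : z₁ ∈ {x ∈ X | ∀ y ∈ X, L y ≤ L x} :=
    ⟨hz₁, fun y hy => (hzF.2 y hy).trans_eq he1.symm⟩
  have hz₂F : z₂ ∈ {x ∈ X | ∀ y ∈ X, L y ≤ L x} :=
    ⟨hz₂, fun y hy => (hzF.2 y hy).trans_eq he2.symm⟩
  have hseg : z ∈ openSegment ℝ z₁ z₂ :=
    ⟨2⁻¹, 2⁻¹, by norm_num, by norm_num, by norm_num, hmidz.symm⟩
  obtain ⟨e1, e2⟩ := hzext z₁ hz₁F z₂ hz₂F hseg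
  exact absurd (e1.trans e2.symm) hne12

section Aux
variable {E : Type*} [Fintype E] [DecidableEq E]

/-- 0/1 indicator vector of a finite set. -/
def chiV (U : Finset E) : E → ℝ := fun i => if i ∈ U then 1 else 0

theorem chiV_inj {A B : Finset E} (h : chiV A = chiV B) : A = B := by
  ext j
  have := congrFun h j
  simp only [chiV] at this
  by_cases hA : j ∈ A <;> by_cases hB : j ∈ B <;> simp_all

open Classical in
/-- The set of coordinates where `z` is not an integer. -/
noncomputable def fracSet (z : E → ℝ) : Finset E :=
  Finset.univ.filter (fun i => ¬ ∃ m : ℤ, z i = (m : ℝ))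

open Classical in
/-- The "class" of `i`: fractional coordinates lying in exactly the same members of `T` as `i`. -/
noncomputable def cls (z : E → ℝ) (T : Finset (Finset E)) (i : E) : Finset E :=
  (fracSet z).filter (fun j => ∀ U ∈ T, (i ∈ U ↔ j ∈ U))

open Classical in
/-- Fractional coordinates covered by some member of `T`. -/
noncomputable def act (z : E → ℝ) (T : Finset (Finset E)) : Finset E :=
  (fracSet z).filter (fun i => ∃ U ∈ T, i ∈ U)

noncomputable def clsFam (z : E → ℝ) (T : Finset (Finset E)) : Finset (Finset E) :=
  (act z T).image (cls z T)

theorem intSum (z : E → ℝ) (A : Finset E) (h : ∀ j ∈ A, ∃ m : ℤ, z j = (m : ℝ)) :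
    ∃ q : ℤ, ∑ j ∈ A, z j = (q : ℝ) := by
  classical
  induction A using Finset.cons_induction with
  | empty => exact ⟨0, by simp⟩
  | cons a s ha ih =>
    obtain ⟨q, hq⟩ := ih (fun j hj => h j (Finset.mem_cons_of_mem hj))
    obtain ⟨m, hm⟩ := h a (Finset.mem_cons_self _ _)
    exact ⟨m + q, by rw [Finset.sum_cons, hm, hq]; push_cast; ring⟩

theorem mem_cls_self {z : E → ℝ} {T : Finset (Finset E)} {i : E} (hi : i ∈ fracSet z) :
    i ∈ cls z T i := by
  simp [cls, hi]

theorem cls_subset_fracSet {z : E → ℝ} {T : Finset (Finset E)} {i : E} :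
    cls z T i ⊆ fracSet z := Finset.filter_subset _ _

theorem cls_eq_of_mem {z : E → ℝ} {T : Finset (Finset E)} {i j : E} (hj : j ∈ cls z T i) :
    cls z T j = cls z T i := by
  classical
  have hiff : ∀ U ∈ T, (i ∈ U ↔ j ∈ U) := by
    intro U hU; exact (Finset.mem_filter.mp hj).2 U hU
  ext k
  simp only [cls, Finset.mem_filter]
  constructor
  · rintro ⟨hk, h2⟩; exact ⟨hk, fun U hU => (hiff U hU).trans (h2 U hU)⟩
  · rintro ⟨hk, h2⟩; exact ⟨hk, fun U hU => (hiff U hU).symm.trans (h2 U hU)⟩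

theorem cls_subset_of_mem {z : E → ℝ} {T : Finset (Finset E)} {i : E} {U : Finset E}
    (hU : U ∈ T) (hi : i ∈ U) : cls z T i ⊆ U := by
  intro j hj
  exact ((Finset.mem_filter.mp hj).2 U hU).mp hi

theorem mem_act_of {z : E → ℝ} {T : Finset (Finset E)} {i : E} (hi : i ∈ fracSet z)
    {U : Finset E} (hU : U ∈ T) (hiU : i ∈ U) : i ∈ act z T := by
  simp only [act, Finset.mem_filter]
  exact ⟨hi, U, hU, hiU⟩

theorem cls_subset_act {z : E → ℝ} {T : Finset (Finset E)} {i : E} (hi : i ∈ act z T) :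
    cls z T i ⊆ act z T := by
  classical
  intro j hj
  obtain ⟨hiS, U, hU, hiU⟩ := Finset.mem_filter.mp hi
  have hjf := Finset.mem_filter.mp hj
  exact Finset.mem_filter.mpr ⟨hjf.1, U, hU, (hjf.2 U hU).mp hiU⟩

/-- Key integrality lemma: a class of an active fractional coordinate has at least 2 elements. -/
theorem two_le_card_cls (z : E → ℝ) (T : Finset (Finset E))
    (hcl : ∀ A ∈ T, ∀ B ∈ T, A ∪ B ∈ T ∧ A ∩ B ∈ T)
    (hint : ∀ U ∈ T, ∃ m : ℤ, ∑ e ∈ U, z e = (m : ℝ))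
    {i : E} (hi : i ∈ act z T) : 2 ≤ (cls z T i).card := by
  classical
  obtain ⟨hiS, U₀, hU₀, hiU₀⟩ := Finset.mem_filter.mp hi
  have hiSfrac : ¬ ∃ m : ℤ, z i = (m : ℝ) := by
    simpa [fracSet] using hiS
  set Fam₁ := T.filter (fun U => i ∈ U) with hF1
  have hF1ne : Fam₁.Nonempty := ⟨U₀, Finset.mem_filter.mpr ⟨hU₀, hiU₀⟩⟩
  set M := Fam₁.inf' hF1ne id with hM
  have hMT : M ∈ T := by
    refine Finset.inf'_mem (T : Set (Finset E)) (fun A hA B hB => ?_) _ hF1ne _ (fun U hU => ?_)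
    · exact (hcl A hA B hB).2
    · exact (Finset.mem_filter.mp hU).1
  have hiM : i ∈ M := by
    have h : ({i} : Finset E) ≤ M :=
      Finset.le_inf' _ _ (fun U hU =>
        Finset.singleton_subset_iff.mpr (Finset.mem_filter.mp hU).2)
    exact Finset.singleton_subset_iff.mp h
  set Fam₂ := T.filter (fun U => i ∉ U) with hF2
  set V := Fam₂.sup id with hV
  have hMVint : ∃ q : ℤ, ∑ e ∈ M ∩ V, z e = (q : ℝ) := by
    rcases Fam₂.eq_empty_or_nonempty with h | h
    · exact ⟨0, by simp [hV, h]⟩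
    · have hVT : V ∈ T := by
        rw [hV, ← Finset.sup'_eq_sup h]
        refine Finset.sup'_mem (T : Set (Finset E)) (fun A hA B hB => ?_) _ h _ (fun U hU => ?_)
        · exact (hcl A hA B hB).1
        · exact (Finset.mem_filter.mp hU).1
      exact hint _ (hcl M hMT V hVT).2
  have hclseq : cls z T i = (M \ V).filter (fun j => ¬ ∃ m : ℤ, z j = (m : ℝ)) := by
    ext j
    simp only [cls, fracSet, Finset.mem_filter, Finset.mem_univ, true_and, Finset.mem_sdiff]
    constructor
    · rintro ⟨hjS, hiff⟩
      refine ⟨⟨?_, ?_⟩, hjS⟩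
      · have h : ({j} : Finset E) ≤ M := by
          refine Finset.le_inf' _ _ (fun U hU => ?_)
          have hm := Finset.mem_filter.mp hU
          exact Finset.singleton_subset_iff.mpr ((hiff U hm.1).mp hm.2)
        exact Finset.singleton_subset_iff.mp h
      · intro hjV
        obtain ⟨U, hU, hjU⟩ := Finset.mem_sup.mp hjV
        have hm := Finset.mem_filter.mp hU
        exact hm.2 ((hiff U hm.1).mpr hjU)
    · rintro ⟨⟨hjM, hjV⟩, hjS⟩
      refine ⟨hjS, fun U hU => ?_⟩
      constructor
      · intro hiU
        exact (Finset.inf'_le id (Finset.mem_filter.mpr ⟨hU, hiU⟩) : M ≤ U) hjM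
      · intro hjU
        by_contra hiU
        exact hjV ((Finset.le_sup (f := id) (Finset.mem_filter.mpr ⟨hU, hiU⟩) : U ≤ V) hjU)
  have hsumint : ∃ q : ℤ, ∑ e ∈ cls z T i, z e = (q : ℝ) := by
    obtain ⟨q₁, hq₁⟩ := hint M hMT
    obtain ⟨q₂, hq₂⟩ := hMVint
    obtain ⟨q₃, hq₃⟩ := intSum z ((M \ V).filter (fun j => ∃ m : ℤ, z j = (m : ℝ)))
      (fun j hj => (Finset.mem_filter.mp hj).2)
    refine ⟨q₁ - q₂ - q₃, ?_⟩
    have hMV : ∑ e ∈ M \ V, z e = ∑ e ∈ M, z e - ∑ e ∈ M ∩ V, z e := by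
      rw [← Finset.sdiff_inter_self_left M V,
        Finset.sum_sdiff_eq_sub (Finset.inter_subset_left)]
    have hsplit :
        (∑ e ∈ (M \ V).filter (fun j => ∃ m : ℤ, z j = (m : ℝ)), z e) +
          ∑ e ∈ (M \ V).filter (fun j => ¬ ∃ m : ℤ, z j = (m : ℝ)), z e
          = ∑ e ∈ M \ V, z e :=
      Finset.sum_filter_add_sum_filter_not _ _ _
    rw [hclseq]
    push_cast
    rw [← hq₁, ← hq₂, ← hMV, ← hsplit, hq₃]
    ring
  obtain ⟨q, hq⟩ := hsumint
  by_contra hcard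
  push_neg at hcard
  have hmem : i ∈ cls z T i := mem_cls_self hiS
  have : cls z T i = {i} := by
    have h1 : (cls z T i).card ≤ 1 := by omega
    ext j
    simp only [Finset.mem_singleton]
    constructor
    · intro hj; exact Finset.card_le_one.mp h1 j hj i hmem
    · rintro rfl; exact hmem
  rw [this, Finset.sum_singleton] at hq
  exact hiSfrac ⟨q, hq⟩

end Aux

section Aux2
variable {E : Type*} [Fintype E] [DecidableEq E]

theorem clsFam_pairwiseDisjoint (z : E → ℝ) (T : Finset (Finset E)) :
    ∀ C ∈ clsFam z T, ∀ C' ∈ clsFam z T, C ≠ C' → Disjoint C C' := by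
  classical
  intro C hC C' hC' hne
  obtain ⟨i, hi, rfl⟩ := Finset.mem_image.mp hC
  obtain ⟨i', hi', rfl⟩ := Finset.mem_image.mp hC'
  rw [Finset.disjoint_left]
  intro j hj hj'
  exact hne ((cls_eq_of_mem hj).symm.trans (cls_eq_of_mem hj'))

theorem act_eq_biUnion (z : E → ℝ) (T : Finset (Finset E)) :
    act z T = (clsFam z T).biUnion id := by
  classical
  ext j
  simp only [Finset.mem_biUnion, id]
  constructor
  · intro hj
    exact ⟨cls z T j, Finset.mem_image_of_mem _ hj,
      mem_cls_self (Finset.mem_filter.mp hj).1⟩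
  · rintro ⟨C, hC, hjC⟩
    obtain ⟨i, hi, rfl⟩ := Finset.mem_image.mp hC
    exact cls_subset_act hi hjC

theorem two_mul_card_clsFam (z : E → ℝ) (T : Finset (Finset E))
    (hcl : ∀ A ∈ T, ∀ B ∈ T, A ∪ B ∈ T ∧ A ∩ B ∈ T)
    (hint : ∀ U ∈ T, ∃ m : ℤ, ∑ e ∈ U, z e = (m : ℝ)) :
    2 * (clsFam z T).card ≤ (act z T).card := by
  classical
  rw [act_eq_biUnion z T]
  calc 2 * (clsFam z T).card = ∑ _C ∈ clsFam z T, 2 := by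
        rw [Finset.sum_const, smul_eq_mul, mul_comm]
    _ ≤ ∑ C ∈ clsFam z T, (id C).card := by
        refine Finset.sum_le_sum (fun C hC => ?_)
        obtain ⟨i, hi, rfl⟩ := Finset.mem_image.mp hC
        exact two_le_card_cls z T hcl hint hi
    _ = ((clsFam z T).biUnion id).card :=
        (Finset.card_biUnion (fun C hC C' hC' h =>
          clsFam_pairwiseDisjoint z T C hC C' hC' h)).symm

/-- Unique-class pointwise sum: summing indicators of all classes gives the indicator of `act`. -/
theorem sum_chiV_clsFam (z : E → ℝ) (T : Finset (Finset E)) :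
    ∑ C ∈ clsFam z T, chiV C = chiV (act z T) := by
  classical
  funext j
  rw [Finset.sum_apply]
  by_cases hj : j ∈ act z T
  · have hmem : cls z T j ∈ clsFam z T := Finset.mem_image_of_mem _ hj
    have hself : j ∈ cls z T j := mem_cls_self (Finset.mem_filter.mp hj).1
    rw [Finset.sum_eq_single_of_mem (cls z T j) hmem]
    · simp [chiV, hself, hj]
    · intro C hC hne
      obtain ⟨i, hi, rfl⟩ := Finset.mem_image.mp hC
      have : j ∉ cls z T i := fun hjC => hne ((cls_eq_of_mem hjC).symm)
      simp [chiV, this]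
  · have : ∀ C ∈ clsFam z T, chiV C j = 0 := by
      intro C hC
      obtain ⟨i, hi, rfl⟩ := Finset.mem_image.mp hC
      have : j ∉ cls z T i := fun hjC => hj (cls_subset_act hi hjC)
      simp [chiV, this]
    rw [Finset.sum_eq_zero this]
    simp [chiV, hj]

/-- Decomposition of the indicator of a member of `T` into singletons (integer coordinates)
and classes. -/
theorem chiV_decomp (z : E → ℝ) (T : Finset (Finset E)) {U : Finset E} (hU : U ∈ T) :
    chiV U = (∑ i ∈ U \ fracSet z, chiV {i}) +
      ∑ C ∈ (clsFam z T).filter (fun C => C ⊆ U), chiV C := by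
  classical
  funext j
  rw [Pi.add_apply, Finset.sum_apply, Finset.sum_apply]
  have h1 : (∑ i ∈ U \ fracSet z, chiV {i} j) = if j ∈ U \ fracSet z then 1 else 0 := by
    rw [Finset.sum_congr rfl (fun i _ => by simp [chiV, eq_comm] :
      ∀ i ∈ U \ fracSet z, chiV {i} j = if i = j then 1 else 0)]
    exact Finset.sum_ite_eq' _ _ _
  have h2 : (∑ C ∈ (clsFam z T).filter (fun C => C ⊆ U), chiV C j)
      = if j ∈ U ∧ j ∈ fracSet z then 1 else 0 := by
    by_cases hj : j ∈ U ∧ j ∈ fracSet z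
    · obtain ⟨hjU, hjS⟩ := hj
      have hact : j ∈ act z T := mem_act_of hjS hU hjU
      have hmem : cls z T j ∈ (clsFam z T).filter (fun C => C ⊆ U) :=
        Finset.mem_filter.mpr ⟨Finset.mem_image_of_mem _ hact, cls_subset_of_mem hU hjU⟩
      rw [Finset.sum_eq_single_of_mem (cls z T j) hmem]
      · simp [chiV, mem_cls_self hjS, hjU, hjS]
      · intro C hC hne
        obtain ⟨i, hi, rfl⟩ := Finset.mem_image.mp (Finset.mem_filter.mp hC).1
        have : j ∉ cls z T i := fun hjC => hne ((cls_eq_of_mem hjC).symm)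
        simp [chiV, this]
    · rw [Finset.sum_eq_zero, if_neg hj]
      intro C hC
      obtain ⟨hC1, hCU⟩ := Finset.mem_filter.mp hC
      obtain ⟨i, hi, rfl⟩ := Finset.mem_image.mp hC1
      have : j ∉ cls z T i := by
        intro hjC
        exact hj ⟨hCU hjC, cls_subset_fracSet hjC⟩
      simp [chiV, this]
  rw [h1, h2]
  by_cases hjU : j ∈ U <;> by_cases hjS : j ∈ fracSet z <;>
    simp [chiV, hjU, hjS]

theorem chiV_eq_sum_singletons (U : Finset E) : chiV U = ∑ i ∈ U, chiV ({i} : Finset E) := by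
  classical
  funext j
  rw [Finset.sum_apply]
  rw [Finset.sum_congr rfl (fun i _ => by simp [chiV, eq_comm] :
    ∀ i ∈ U, chiV {i} j = if i = j then 1 else 0)]
  rw [Finset.sum_ite_eq' _ _ _]
  simp [chiV]

end Aux2

section Aux3
variable {E : Type*} [Fintype E] [DecidableEq E]

theorem exists_perturbation (z : E → ℝ) (T₁ T₂ : Finset (Finset E))
    (hcl₁ : ∀ A ∈ T₁, ∀ B ∈ T₁, A ∪ B ∈ T₁ ∧ A ∩ B ∈ T₁)
    (hcl₂ : ∀ A ∈ T₂, ∀ B ∈ T₂, A ∪ B ∈ T₂ ∧ A ∩ B ∈ T₂)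
    (hint₁ : ∀ U ∈ T₁, ∃ m : ℤ, ∑ e ∈ U, z e = (m : ℝ))
    (hint₂ : ∀ U ∈ T₂, ∃ m : ℤ, ∑ e ∈ U, z e = (m : ℝ))
    (hfrac : ¬ IsIntegerVec z) :
    ∃ d : E → ℝ, d ≠ 0 ∧ (∀ i, (∃ m : ℤ, z i = (m : ℝ)) → d i = 0) ∧
      (∀ U ∈ T₁, ∑ e ∈ U, d e = 0) ∧ (∀ U ∈ T₂, ∑ e ∈ U, d e = 0) := by
  classical
  set S := fracSet z with hS
  have hSne : S.Nonempty := by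
    rw [IsIntegerVec] at hfrac
    push_neg at hfrac
    obtain ⟨i, hi⟩ := hfrac
    exact ⟨i, by simp [hS, fracSet]; exact hi⟩
  set C₁ := clsFam z T₁ with hC₁
  set C₂ := clsFam z T₂ with hC₂
  set GE : Finset (E → ℝ) :=
    ((Finset.univ \ S).image (fun i => chiV {i})) ∪ ((C₁ ∪ C₂).image chiV) with hGE
  set Vsp := Submodule.span ℝ (GE : Set (E → ℝ)) with hVsp
  have hsub : ((fun i => chiV ({i} : Finset E)) '' ↑(Finset.univ \ S)) ∪
      chiV '' ↑(C₁ ∪ C₂) ⊆ (GE : Set (E → ℝ)) := by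
    intro v hv
    rcases hv with ⟨i, hi, rfl⟩ | ⟨C, hC, rfl⟩
    · exact Finset.mem_coe.mpr (Finset.mem_union_left _ (Finset.mem_image_of_mem _ (Finset.mem_coe.mp hi)))
    · exact Finset.mem_coe.mpr (Finset.mem_union_right _ (Finset.mem_image_of_mem _ (Finset.mem_coe.mp hC)))
  have hmemsingle : ∀ i ∉ S, chiV ({i} : Finset E) ∈ Vsp := by
    intro i hi
    exact Submodule.subset_span (hsub (Or.inl ⟨i, by simpa using hi, rfl⟩))
  have hmemchi₁ : ∀ U ∈ T₁, chiV U ∈ Vsp := by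
    intro U hU
    rw [chiV_decomp z T₁ hU]
    refine Submodule.add_mem _ (Submodule.sum_mem _ fun i hi => ?_) (Submodule.sum_mem _ fun C hC => ?_)
    · exact hmemsingle i (Finset.mem_sdiff.mp hi).2
    · refine Submodule.subset_span (hsub (Or.inr ⟨C, ?_, rfl⟩))
      exact Finset.mem_coe.mpr (Finset.mem_union_left _ (Finset.mem_filter.mp hC).1)
  have hmemchi₂ : ∀ U ∈ T₂, chiV U ∈ Vsp := by
    intro U hU
    rw [chiV_decomp z T₂ hU]
    refine Submodule.add_mem _ (Submodule.sum_mem _ fun i hi => ?_) (Submodule.sum_mem _ fun C hC => ?_)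
    · exact hmemsingle i (Finset.mem_sdiff.mp hi).2
    · refine Submodule.subset_span (hsub (Or.inr ⟨C, ?_, rfl⟩))
      exact Finset.mem_coe.mpr (Finset.mem_union_right _ (Finset.mem_filter.mp hC).1)
  -- cardinality bounds
  have hA₁sub : act z T₁ ⊆ S := Finset.filter_subset _ _
  have hA₂sub : act z T₂ ⊆ S := Finset.filter_subset _ _
  have h2n₁ : 2 * C₁.card ≤ (act z T₁).card := two_mul_card_clsFam z T₁ hcl₁ hint₁
  have h2n₂ : 2 * C₂.card ≤ (act z T₂).card := two_mul_card_clsFam z T₂ hcl₂ hint₂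
  have hA₁le : (act z T₁).card ≤ S.card := Finset.card_le_card hA₁sub
  have hA₂le : (act z T₂).card ≤ S.card := Finset.card_le_card hA₂sub
  have hSle : S.card ≤ Fintype.card E := Finset.card_le_univ S
  have hScard : 1 ≤ S.card := Finset.card_pos.mpr hSne
  have hGEcard : GE.card ≤ (Fintype.card E - S.card) + (C₁ ∪ C₂).card := by
    calc GE.card ≤ ((Finset.univ \ S).image (fun i => chiV {i})).card + ((C₁ ∪ C₂).image chiV).card :=
          Finset.card_union_le _ _
      _ ≤ (Finset.univ \ S).card + (C₁ ∪ C₂).card := by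
          gcongr <;> exact Finset.card_image_le
      _ = (Fintype.card E - S.card) + (C₁ ∪ C₂).card := by
          rw [Finset.card_sdiff_of_subset (Finset.subset_univ S), Finset.card_univ]
  have hfr : Module.finrank ℝ Vsp < Fintype.card E := by
    have hrk : Module.finrank ℝ Vsp ≤ GE.card := finrank_span_finset_le_card GE
    by_cases hcase : (C₁ ∪ C₂).card < S.card
    · calc Module.finrank ℝ Vsp ≤ GE.card := hrk
        _ < Fintype.card E := by omega
    · -- the degenerate case: a linear dependency exists
      push_neg at hcase
      have hunle : (C₁ ∪ C₂).card ≤ C₁.card + C₂.card := Finset.card_union_le _ _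
      have hsum_eq : C₁.card + C₂.card = S.card ∧ (C₁ ∪ C₂).card = S.card := by
        constructor <;> omega
      obtain ⟨hsum_eq1, hsum_eq2⟩ := hsum_eq
      have hdisj : Disjoint C₁ C₂ := by
        have := Finset.card_union_add_card_inter C₁ C₂
        rw [Finset.disjoint_iff_inter_eq_empty, ← Finset.card_eq_zero]
        omega
      have hA₁eq : act z T₁ = S := Finset.eq_of_subset_of_card_le hA₁sub (by omega)
      have hA₂eq : act z T₂ = S := Finset.eq_of_subset_of_card_le hA₂sub (by omega)
      have hC₂ne : C₂.Nonempty := by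
        rw [Finset.nonempty_iff_ne_empty]
        intro h
        have h2 : S = C₂.biUnion id := by
          rw [← hA₂eq, hC₂]; exact act_eq_biUnion z T₂
        rw [h, Finset.biUnion_empty] at h2
        exact hSne.ne_empty h2
      obtain ⟨C₀, hC₀⟩ := hC₂ne
      have hdep : chiV C₀ = (∑ C ∈ C₁, chiV C) - ∑ C ∈ C₂.erase C₀, chiV C := by
        have h1 : ∑ C ∈ C₁, chiV C = chiV S := by rw [← hA₁eq]; exact sum_chiV_clsFam z T₁
        have h2 : ∑ C ∈ C₂, chiV C = chiV S := by rw [← hA₂eq]; exact sum_chiV_clsFam z T₂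
        have h3 : chiV C₀ + ∑ C ∈ C₂.erase C₀, chiV C = ∑ C ∈ C₂, chiV C :=
          Finset.add_sum_erase _ _ hC₀
        rw [h1, ← h2, ← h3]
        abel
      have hC₀GE : chiV C₀ ∈ GE :=
        Finset.mem_union_right _ (Finset.mem_image_of_mem _ (Finset.mem_union_right _ hC₀))
      have hdepmem : chiV C₀ ∈ Submodule.span ℝ ((GE.erase (chiV C₀)) : Set (E → ℝ)) := by
        have hmem2 : (∑ C ∈ C₁, chiV C) - ∑ C ∈ C₂.erase C₀, chiV C ∈
            Submodule.span ℝ ((GE.erase (chiV C₀)) : Set (E → ℝ)) := by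
          refine Submodule.sub_mem _ (Submodule.sum_mem _ fun C hC => ?_)
            (Submodule.sum_mem _ fun C hC => ?_)
          · refine Submodule.subset_span (Finset.mem_coe.mpr (Finset.mem_erase.mpr ⟨?_, ?_⟩))
            · intro heq
              have : C = C₀ := chiV_inj heq
              subst this
              exact (Finset.disjoint_left.mp hdisj hC) hC₀
            · exact Finset.mem_union_right _ (Finset.mem_image_of_mem _ (Finset.mem_union_left _ hC))
          · refine Submodule.subset_span (Finset.mem_coe.mpr (Finset.mem_erase.mpr ⟨?_, ?_⟩))
            · intro heq
              exact (Finset.mem_erase.mp hC).1 (chiV_inj heq)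
            · exact Finset.mem_union_right _
                (Finset.mem_image_of_mem _ (Finset.mem_union_right _ (Finset.mem_erase.mp hC).2))
        rw [← hdep] at hmem2
        exact hmem2
      have hle : Vsp ≤ Submodule.span ℝ ((GE.erase (chiV C₀)) : Set (E → ℝ)) := by
        rw [hVsp, Submodule.span_le]
        intro v hv
        by_cases hveq : v = chiV C₀
        · subst hveq; exact hdepmem
        · exact Submodule.subset_span (Finset.mem_coe.mpr
            (Finset.mem_erase.mpr ⟨hveq, Finset.mem_coe.mp hv⟩))
      have hrk2 : Module.finrank ℝ Vsp ≤ (GE.erase (chiV C₀)).card := by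
        calc Module.finrank ℝ Vsp
            ≤ Module.finrank ℝ (Submodule.span ℝ ((GE.erase (chiV C₀)) : Set (E → ℝ))) :=
              Submodule.finrank_mono hle
          _ ≤ (GE.erase (chiV C₀)).card := finrank_span_finset_le_card _
      have hacard : (GE.erase (chiV C₀)).card = GE.card - 1 :=
        Finset.card_erase_of_mem hC₀GE
      have hGE1 : 1 ≤ GE.card := Finset.card_pos.mpr ⟨_, hC₀GE⟩
      omega
  -- get the functional
  have hVne : Vsp ≠ ⊤ := by
    intro h
    rw [h] at hfr
    rw [finrank_top] at hfr
    rw [Module.finrank_pi] at hfr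
    exact lt_irrefl _ hfr
  obtain ⟨φ, hφne, hφmap⟩ :=
    Submodule.exists_dual_map_eq_bot_of_lt_top (lt_top_iff_ne_top.mpr hVne) inferInstance
  have hφ0 : ∀ v ∈ Vsp, φ v = 0 := by
    intro v hv
    have : φ v ∈ Vsp.map φ := Submodule.mem_map_of_mem hv
    rw [hφmap] at this
    simpa using this
  refine ⟨fun i => φ (chiV {i}), ?_, ?_, ?_, ?_⟩
  · intro h
    apply hφne
    apply LinearMap.ext
    intro x
    have hx : x = ∑ i, x i • chiV ({i} : Finset E) := by
      funext j
      rw [Finset.sum_apply]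
      rw [Finset.sum_congr rfl (fun i _ => by simp [chiV, eq_comm] :
        ∀ i ∈ Finset.univ, (x i • chiV {i}) j = if i = j then x i else 0)]
      rw [Finset.sum_ite_eq' _ _ _]
      simp
    rw [hx]
    rw [map_sum]
    simp only [map_smul]
    have : ∀ i, φ (chiV ({i} : Finset E)) = 0 := fun i => congrFun h i
    simp [this, smul_eq_mul]
  · intro i hi
    apply hφ0
    apply hmemsingle
    simp only [hS, fracSet, Finset.mem_filter, Finset.mem_univ, true_and, not_not]
    exact hi
  · intro U hU
    have := hφ0 _ (hmemchi₁ U hU)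
    rw [chiV_eq_sum_singletons U, map_sum] at this
    exact this
  · intro U hU
    have := hφ0 _ (hmemchi₂ U hU)
    rw [chiV_eq_sum_singletons U, map_sum] at this
    exact this

end Aux3

section Aux4
variable {E : Type*} [Fintype E] [DecidableEq E]

theorem midpoint_property (g₁ g₂ : Finset E → ℤ) (c d : E → ℤ) (z : E → ℝ)
    (hz₁ : ∀ U : Finset E, ∑ e ∈ U, z e ≤ (g₁ U : ℝ))
    (hz₂ : ∀ U : Finset E, (g₂ U : ℝ) ≤ ∑ e ∈ U, z e)
    (hg₁ : ∀ A B : Finset E, g₁ (A ∪ B) + g₁ (A ∩ B) ≤ g₁ A + g₁ B)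
    (hg₂ : ∀ A B : Finset E, g₂ A + g₂ B ≤ g₂ (A ∪ B) + g₂ (A ∩ B))
    (hbox : ∀ i, (c i : ℝ) ≤ z i ∧ z i ≤ (d i : ℝ))
    (hfrac : ¬ IsIntegerVec z) :
    ∃ z₁ z₂ : E → ℝ,
      ((∀ U : Finset E, ∑ e ∈ U, z₁ e ≤ (g₁ U : ℝ)) ∧
        (∀ U : Finset E, (g₂ U : ℝ) ≤ ∑ e ∈ U, z₁ e) ∧
        (∀ i, (c i : ℝ) ≤ z₁ i ∧ z₁ i ≤ (d i : ℝ))) ∧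
      ((∀ U : Finset E, ∑ e ∈ U, z₂ e ≤ (g₁ U : ℝ)) ∧
        (∀ U : Finset E, (g₂ U : ℝ) ≤ ∑ e ∈ U, z₂ e) ∧
        (∀ i, (c i : ℝ) ≤ z₂ i ∧ z₂ i ≤ (d i : ℝ))) ∧
      z₁ ≠ z₂ ∧ z = (2⁻¹ : ℝ) • z₁ + (2⁻¹ : ℝ) • z₂ := by
  classical
  set T₁ : Finset (Finset E) :=
    Finset.univ.filter (fun U => ∑ e ∈ U, z e = (g₁ U : ℝ)) with hT₁
  set T₂ : Finset (Finset E) :=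
    Finset.univ.filter (fun U => ∑ e ∈ U, z e = (g₂ U : ℝ)) with hT₂
  have hmemT₁ : ∀ U, U ∈ T₁ ↔ ∑ e ∈ U, z e = (g₁ U : ℝ) := by
    intro U; simp [hT₁]
  have hmemT₂ : ∀ U, U ∈ T₂ ↔ ∑ e ∈ U, z e = (g₂ U : ℝ) := by
    intro U; simp [hT₂]
  have hcl₁ : ∀ A ∈ T₁, ∀ B ∈ T₁, A ∪ B ∈ T₁ ∧ A ∩ B ∈ T₁ := by
    intro A hA B hB
    rw [hmemT₁] at hA hB
    have hid : ∑ e ∈ A ∪ B, z e + ∑ e ∈ A ∩ B, z e = ∑ e ∈ A, z e + ∑ e ∈ B, z e :=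
      Finset.sum_union_inter
    have hsub : (g₁ (A ∪ B) : ℝ) + (g₁ (A ∩ B) : ℝ) ≤ (g₁ A : ℝ) + (g₁ B : ℝ) := by
      exact_mod_cast hg₁ A B
    have h1 := hz₁ (A ∪ B)
    have h2 := hz₁ (A ∩ B)
    rw [hmemT₁, hmemT₁]
    constructor <;> linarith
  have hcl₂ : ∀ A ∈ T₂, ∀ B ∈ T₂, A ∪ B ∈ T₂ ∧ A ∩ B ∈ T₂ := by
    intro A hA B hB
    rw [hmemT₂] at hA hB
    have hid : ∑ e ∈ A ∪ B, z e + ∑ e ∈ A ∩ B, z e = ∑ e ∈ A, z e + ∑ e ∈ B, z e :=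
      Finset.sum_union_inter
    have hsub : (g₂ A : ℝ) + (g₂ B : ℝ) ≤ (g₂ (A ∪ B) : ℝ) + (g₂ (A ∩ B) : ℝ) := by
      exact_mod_cast hg₂ A B
    have h1 := hz₂ (A ∪ B)
    have h2 := hz₂ (A ∩ B)
    rw [hmemT₂, hmemT₂]
    constructor <;> linarith
  obtain ⟨d₀, hd₀ne, hd₀int, hd₀T₁, hd₀T₂⟩ :=
    exists_perturbation z T₁ T₂ hcl₁ hcl₂
      (fun U hU => ⟨g₁ U, (hmemT₁ U).mp hU⟩) (fun U hU => ⟨g₂ U, (hmemT₂ U).mp hU⟩) hfrac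
  set B : ℝ := (∑ i, |d₀ i|) + 1 with hB
  have hBpos : 0 < B := by
    have : (0:ℝ) ≤ ∑ i, |d₀ i| := Finset.sum_nonneg (fun i _ => abs_nonneg _)
    linarith
  have hbd : ∀ U : Finset E, |∑ e ∈ U, d₀ e| ≤ B := by
    intro U
    calc |∑ e ∈ U, d₀ e| ≤ ∑ e ∈ U, |d₀ e| := Finset.abs_sum_le_sum_abs _ _
      _ ≤ ∑ i, |d₀ i| := Finset.sum_le_sum_of_subset_of_nonneg (Finset.subset_univ U)
          (fun i _ _ => abs_nonneg _)
      _ ≤ B := by linarith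
  -- the three slack quantities
  set P₁ : Finset (Finset E) :=
    Finset.univ.filter (fun U => ∑ e ∈ U, z e < (g₁ U : ℝ)) with hP₁
  set P₂ : Finset (Finset E) :=
    Finset.univ.filter (fun U => (g₂ U : ℝ) < ∑ e ∈ U, z e) with hP₂
  set Sf : Finset E := Finset.univ.filter (fun i => ¬ ∃ m : ℤ, z i = (m : ℝ)) with hSf
  set δ₁ : ℝ := if h : P₁.Nonempty then P₁.inf' h (fun U => (g₁ U : ℝ) - ∑ e ∈ U, z e) else 1
    with hδ₁
  set δ₂ : ℝ := if h : P₂.Nonempty then P₂.inf' h (fun U => ∑ e ∈ U, z e - (g₂ U : ℝ)) else 1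
    with hδ₂
  set δ₃ : ℝ := if h : Sf.Nonempty then Sf.inf' h (fun i => min (z i - c i) ((d i : ℝ) - z i))
    else 1 with hδ₃
  have hfracbox : ∀ i ∈ Sf, (c i : ℝ) < z i ∧ z i < (d i : ℝ) := by
    intro i hi
    rw [hSf, Finset.mem_filter] at hi
    obtain ⟨-, hi⟩ := hi
    constructor
    · rcases lt_or_eq_of_le (hbox i).1 with h | h
      · exact h
      · exact absurd ⟨c i, h.symm⟩ hi
    · rcases lt_or_eq_of_le (hbox i).2 with h | h
      · exact h
      · exact absurd ⟨d i, h⟩ hi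
  have hδ₁pos : 0 < δ₁ := by
    rw [hδ₁]
    split_ifs with h
    · rw [Finset.lt_inf'_iff]
      intro U hU
      rw [hP₁, Finset.mem_filter] at hU
      linarith [hU.2]
    · norm_num
  have hδ₂pos : 0 < δ₂ := by
    rw [hδ₂]
    split_ifs with h
    · rw [Finset.lt_inf'_iff]
      intro U hU
      rw [hP₂, Finset.mem_filter] at hU
      linarith [hU.2]
    · norm_num
  have hδ₃pos : 0 < δ₃ := by
    rw [hδ₃]
    split_ifs with h
    · rw [Finset.lt_inf'_iff]
      intro i hi
      obtain ⟨h1, h2⟩ := hfracbox i hi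
      simp only [lt_min_iff]
      constructor <;> linarith
    · norm_num
  set ε : ℝ := min δ₁ (min δ₂ δ₃) / B with hε
  have hεpos : 0 < ε := div_pos (lt_min hδ₁pos (lt_min hδ₂pos hδ₃pos)) hBpos
  have hεB : ε * B ≤ δ₁ ∧ ε * B ≤ δ₂ ∧ ε * B ≤ δ₃ := by
    have : ε * B = min δ₁ (min δ₂ δ₃) := by
      rw [hε, div_mul_cancel₀]
      exact ne_of_gt hBpos
    rw [this]
    exact ⟨min_le_left _ _, (min_le_right _ _).trans (min_le_left _ _),
      (min_le_right _ _).trans (min_le_right _ _)⟩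
  have key : ∀ d' : E → ℝ, (∀ i, (∃ m : ℤ, z i = (m : ℝ)) → d' i = 0) →
      (∀ U ∈ T₁, ∑ e ∈ U, d' e = 0) → (∀ U ∈ T₂, ∑ e ∈ U, d' e = 0) →
      (∀ i, |d' i| ≤ |d₀ i|) →
      ((∀ U : Finset E, ∑ e ∈ U, (z + ε • d') e ≤ (g₁ U : ℝ)) ∧
        (∀ U : Finset E, (g₂ U : ℝ) ≤ ∑ e ∈ U, (z + ε • d') e) ∧
        (∀ i, (c i : ℝ) ≤ (z + ε • d') i ∧ (z + ε • d') i ≤ (d i : ℝ))) := by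
    intro d' hint' hT₁' hT₂' habs
    have hsum : ∀ U : Finset E, ∑ e ∈ U, (z + ε • d') e = (∑ e ∈ U, z e) + ε * ∑ e ∈ U, d' e := by
      intro U
      rw [Finset.mul_sum, ← Finset.sum_add_distrib]
      exact Finset.sum_congr rfl (fun e _ => by simp [smul_eq_mul])
    have hbd' : ∀ U : Finset E, |∑ e ∈ U, d' e| ≤ B := by
      intro U
      calc |∑ e ∈ U, d' e| ≤ ∑ e ∈ U, |d' e| := Finset.abs_sum_le_sum_abs _ _
        _ ≤ ∑ e ∈ U, |d₀ e| := Finset.sum_le_sum (fun e _ => habs e)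
        _ ≤ ∑ i, |d₀ i| := Finset.sum_le_sum_of_subset_of_nonneg (Finset.subset_univ U)
            (fun i _ _ => abs_nonneg _)
        _ ≤ B := by linarith
    refine ⟨?_, ?_, ?_⟩
    · intro U
      by_cases hU : U ∈ T₁
      · rw [hsum, hT₁' U hU, (hmemT₁ U).mp hU]
        simp
      · have hUP : U ∈ P₁ := by
          rw [hP₁, Finset.mem_filter]
          exact ⟨Finset.mem_univ _, lt_of_le_of_ne (hz₁ U) (fun h => hU ((hmemT₁ U).mpr h))⟩
        have hslack : δ₁ ≤ (g₁ U : ℝ) - ∑ e ∈ U, z e := by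
          rw [hδ₁, dif_pos ⟨U, hUP⟩]
          exact Finset.inf'_le _ hUP
        have h1 : ε * ∑ e ∈ U, d' e ≤ ε * B :=
          mul_le_mul_of_nonneg_left ((le_abs_self _).trans (hbd' U)) (le_of_lt hεpos)
        rw [hsum]
        linarith [hεB.1]
    · intro U
      by_cases hU : U ∈ T₂
      · rw [hsum, hT₂' U hU, (hmemT₂ U).mp hU]
        simp
      · have hUP : U ∈ P₂ := by
          rw [hP₂, Finset.mem_filter]
          exact ⟨Finset.mem_univ _, lt_of_le_of_ne (hz₂ U) (fun h => hU ((hmemT₂ U).mpr h.symm))⟩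
        have hslack : δ₂ ≤ ∑ e ∈ U, z e - (g₂ U : ℝ) := by
          rw [hδ₂, dif_pos ⟨U, hUP⟩]
          exact Finset.inf'_le _ hUP
        have h1 : -(ε * B) ≤ ε * ∑ e ∈ U, d' e := by
          have h0 : -B ≤ ∑ e ∈ U, d' e := neg_le_of_abs_le (hbd' U)
          have := mul_le_mul_of_nonneg_left h0 (le_of_lt hεpos)
          linarith
        rw [hsum]
        linarith [hεB.2.1]
    · intro i
      by_cases hdi : d' i = 0
      · simp [hdi, smul_eq_mul]
        exact hbox i
      · have hiSf : i ∈ Sf := by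
          rw [hSf, Finset.mem_filter]
          refine ⟨Finset.mem_univ _, fun h => hdi (hint' i h)⟩
        have hslack : δ₃ ≤ min (z i - c i) ((d i : ℝ) - z i) := by
          rw [hδ₃, dif_pos ⟨i, hiSf⟩]
          exact Finset.inf'_le _ hiSf
        have habs' : |ε * d' i| ≤ ε * B := by
          rw [abs_mul, abs_of_pos hεpos]
          refine mul_le_mul_of_nonneg_left ((habs i).trans ?_) (le_of_lt hεpos)
          calc |d₀ i| ≤ ∑ j, |d₀ j| := Finset.single_le_sum (f := fun j => |d₀ j|)
                (fun j _ => abs_nonneg _) (Finset.mem_univ i)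
            _ ≤ B := by linarith
        have h1 : -(ε * B) ≤ ε * d' i := neg_le_of_abs_le habs'
        have h2 : ε * d' i ≤ ε * B := le_of_abs_le habs'
        have hm1 : δ₃ ≤ z i - c i := hslack.trans (min_le_left _ _)
        have hm2 : δ₃ ≤ (d i : ℝ) - z i := hslack.trans (min_le_right _ _)
        constructor
        · simp only [Pi.add_apply, Pi.smul_apply, smul_eq_mul]
          linarith [hεB.2.2]
        · simp only [Pi.add_apply, Pi.smul_apply, smul_eq_mul]
          linarith [hεB.2.2]
  have hk₁ := key d₀ hd₀int hd₀T₁ hd₀T₂ (fun i => le_refl _)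
  have hk₂ := key (-d₀) (fun i hi => by simp [hd₀int i hi])
    (fun U hU => by simp [hd₀T₁ U hU]) (fun U hU => by simp [hd₀T₂ U hU])
    (fun i => by simp)
  refine ⟨z + ε • d₀, z + ε • (-d₀), hk₁, hk₂, ?_, ?_⟩
  · intro h
    apply hd₀ne
    funext i
    have := congrFun h i
    simp only [Pi.add_apply, Pi.smul_apply, Pi.neg_apply, smul_eq_mul] at this
    have : ε * d₀ i = 0 := by linarith
    have := (mul_eq_zero.mp this).resolve_left (ne_of_gt hεpos)
    simpa using this
  · funext i
    simp only [Pi.add_apply, Pi.smul_apply, Pi.neg_apply, smul_eq_mul]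
    ring

end Aux4

section Assemble
variable {E : Type*} [Fintype E] [DecidableEq E]

theorem X_convex (g₁ g₂ : Finset E → ℤ) (c d : E → ℤ) :
    Convex ℝ {x : E → ℝ | (∀ U : Finset E, ∑ e ∈ U, x e ≤ (g₁ U : ℝ)) ∧
      (∀ U : Finset E, (g₂ U : ℝ) ≤ ∑ e ∈ U, x e) ∧
      (∀ i, (c i : ℝ) ≤ x i ∧ x i ≤ (d i : ℝ))} := by
  intro x hx y hy a b ha hb hab
  have hsum : ∀ U : Finset E, ∑ e ∈ U, (a • x + b • y) e
      = a * ∑ e ∈ U, x e + b * ∑ e ∈ U, y e := by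
    intro U
    rw [Finset.mul_sum, Finset.mul_sum, ← Finset.sum_add_distrib]
    exact Finset.sum_congr rfl (fun e _ => by simp [smul_eq_mul])
  refine ⟨fun U => ?_, fun U => ?_, fun i => ?_⟩
  · rw [hsum]
    have h1 := mul_le_mul_of_nonneg_left (hx.1 U) ha
    have h2 := mul_le_mul_of_nonneg_left (hy.1 U) hb
    have h3 : a * (g₁ U : ℝ) + b * (g₁ U : ℝ) = (g₁ U : ℝ) := by
      rw [← add_mul, hab, one_mul]
    linarith
  · rw [hsum]
    have h1 := mul_le_mul_of_nonneg_left (hx.2.1 U) ha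
    have h2 := mul_le_mul_of_nonneg_left (hy.2.1 U) hb
    have h3 : a * (g₂ U : ℝ) + b * (g₂ U : ℝ) = (g₂ U : ℝ) := by
      rw [← add_mul, hab, one_mul]
    linarith
  · have h1l := mul_le_mul_of_nonneg_left (hx.2.2 i).1 ha
    have h1r := mul_le_mul_of_nonneg_left (hx.2.2 i).2 ha
    have h2l := mul_le_mul_of_nonneg_left (hy.2.2 i).1 hb
    have h2r := mul_le_mul_of_nonneg_left (hy.2.2 i).2 hb
    have h3 : ∀ t : ℝ, a * t + b * t = t := fun t => by rw [← add_mul, hab, one_mul]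
    constructor <;> simp only [Pi.add_apply, Pi.smul_apply, smul_eq_mul] <;>
      [linarith [h3 ((c i : ℝ))]; linarith [h3 ((d i : ℝ))]]

theorem X_compact (g₁ g₂ : Finset E → ℤ) (c d : E → ℤ) :
    IsCompact {x : E → ℝ | (∀ U : Finset E, ∑ e ∈ U, x e ≤ (g₁ U : ℝ)) ∧
      (∀ U : Finset E, (g₂ U : ℝ) ≤ ∑ e ∈ U, x e) ∧
      (∀ i, (c i : ℝ) ≤ x i ∧ x i ≤ (d i : ℝ))} := by
  have hXeq : {x : E → ℝ | (∀ U : Finset E, ∑ e ∈ U, x e ≤ (g₁ U : ℝ)) ∧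
      (∀ U : Finset E, (g₂ U : ℝ) ≤ ∑ e ∈ U, x e) ∧
      (∀ i, (c i : ℝ) ≤ x i ∧ x i ≤ (d i : ℝ))}
      = ({x : E → ℝ | ∀ U : Finset E, ∑ e ∈ U, x e ≤ (g₁ U : ℝ)} ∩
          {x : E → ℝ | ∀ U : Finset E, (g₂ U : ℝ) ≤ ∑ e ∈ U, x e}) ∩
        Set.pi Set.univ (fun i => Set.Icc ((c i : ℝ)) ((d i : ℝ))) := by
    ext x
    simp only [Set.mem_setOf_eq, Set.mem_inter_iff, Set.mem_pi, Set.mem_univ, true_implies,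
      Set.mem_Icc]
    tauto
  rw [hXeq]
  have hsc : ∀ U : Finset E, Continuous (fun x : E → ℝ => ∑ e ∈ U, x e) :=
    fun U => continuous_finset_sum U (fun e _ => continuous_apply e)
  refine IsCompact.inter_left (isCompact_univ_pi fun i => isCompact_Icc) ?_
  refine IsClosed.inter ?_ ?_
  · have : {x : E → ℝ | ∀ U : Finset E, ∑ e ∈ U, x e ≤ (g₁ U : ℝ)}
        = ⋂ U : Finset E, {x : E → ℝ | ∑ e ∈ U, x e ≤ (g₁ U : ℝ)} := by
      ext x; simp [Set.mem_iInter]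
    rw [this]
    exact isClosed_iInter fun U => isClosed_le (hsc U) continuous_const
  · have : {x : E → ℝ | ∀ U : Finset E, (g₂ U : ℝ) ≤ ∑ e ∈ U, x e}
        = ⋂ U : Finset E, {x : E → ℝ | (g₂ U : ℝ) ≤ ∑ e ∈ U, x e} := by
      ext x; simp [Set.mem_iInter]
    rw [this]
    exact isClosed_iInter fun U => isClosed_le continuous_const (hsc U)

end Assemble

/-- The extended polymatroid `EP_f = {x | x(U) ≤ f(U) for all U ⊆ E}`
of a submodular function `f` satisfies condition (★). -/
theorem extendedPolymatroid_conditionStar {E : Type*} [Fintype E] [DecidableEq E]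
    (f : Finset E → ℤ) (hf : Submodular f) :
    ConditionStar {x : E → ℝ | ∀ U : Finset E, ∑ e ∈ U, x e ≤ (f U : ℝ)} := by
  classical
  intro k r hrk w c d hcd
  by_cases hr : r = 0
  · subst hr
    apply aux_trivial
    rintro x ⟨⟨hx1, -⟩, -⟩
    obtain ⟨y, hy, hxy⟩ := Set.mem_smul_set.mp hx1
    intro i
    refine ⟨0, ?_⟩
    rw [← hxy]
    simp
  by_cases hs : k - r = 0
  · apply aux_trivial
    rintro x ⟨⟨-, hx2⟩, -⟩
    obtain ⟨y, hy, hxy⟩ := hx2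
    obtain ⟨u, hu, hyu⟩ := Set.mem_smul_set.mp hy
    intro i
    refine ⟨w i, ?_⟩
    rw [← hxy, ← hyu]
    simp [hs]
  · set g₁ : Finset E → ℤ := fun U => (r : ℤ) * f U with hg₁def
    set g₂ : Finset E → ℤ := fun U => (∑ e ∈ U, w e) - ((k - r : ℕ) : ℤ) * f U with hg₂def
    have hrpos : (0:ℝ) < (r:ℝ) := by
      exact_mod_cast Nat.pos_of_ne_zero hr
    have hspos : (0:ℝ) < ((k - r : ℕ):ℝ) := by
      exact_mod_cast Nat.pos_of_ne_zero hs
    have hXeq : {x ∈ (((r : ℝ) • {x : E → ℝ | ∀ U : Finset E, ∑ e ∈ U, x e ≤ (f U : ℝ)}) ∩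
          ((fun y => (fun i => (w i : ℝ)) - y) ''
            (((k - r : ℕ) : ℝ) • {x : E → ℝ | ∀ U : Finset E, ∑ e ∈ U, x e ≤ (f U : ℝ)}))) |
          ∀ i, (c i : ℝ) ≤ x i ∧ x i ≤ (d i : ℝ)}
        = {x : E → ℝ | (∀ U : Finset E, ∑ e ∈ U, x e ≤ (g₁ U : ℝ)) ∧
            (∀ U : Finset E, (g₂ U : ℝ) ≤ ∑ e ∈ U, x e) ∧
            (∀ i, (c i : ℝ) ≤ x i ∧ x i ≤ (d i : ℝ))} := by
      ext x
      simp only [Set.mem_setOf_eq, Set.mem_inter_iff]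
      constructor
      · rintro ⟨⟨hx1, hx2⟩, hbox⟩
        refine ⟨?_, ?_, hbox⟩
        · intro U
          obtain ⟨y, hy, hxy⟩ := Set.mem_smul_set.mp hx1
          rw [← hxy]
          have hsum : ∑ e ∈ U, ((r:ℝ) • y) e = (r:ℝ) * ∑ e ∈ U, y e := by
            rw [Finset.mul_sum]
            exact Finset.sum_congr rfl fun e _ => by simp [smul_eq_mul]
          rw [hsum, hg₁def]
          push_cast
          exact mul_le_mul_of_nonneg_left (hy U) (le_of_lt hrpos)
        · intro U
          obtain ⟨y, hy, hxy⟩ := hx2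
          obtain ⟨u, hu, hyu⟩ := Set.mem_smul_set.mp hy
          rw [← hxy, ← hyu]
          have hsum : ∑ e ∈ U, ((fun i => (w i:ℝ)) - ((k - r : ℕ):ℝ) • u) e
              = ∑ e ∈ U, (w e : ℝ) - ((k - r : ℕ):ℝ) * ∑ e ∈ U, u e := by
            rw [Finset.mul_sum, ← Finset.sum_sub_distrib]
            exact Finset.sum_congr rfl fun e _ => by simp [smul_eq_mul]
          rw [hsum, hg₂def]
          push_cast
          have := mul_le_mul_of_nonneg_left (hu U) (le_of_lt hspos)
          linarith
      · rintro ⟨h1, h2, hbox⟩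
        refine ⟨⟨?_, ?_⟩, hbox⟩
        · refine Set.mem_smul_set.mpr ⟨(r:ℝ)⁻¹ • x, ?_, ?_⟩
          · intro U
            have hsum : ∑ e ∈ U, ((r:ℝ)⁻¹ • x) e = (r:ℝ)⁻¹ * ∑ e ∈ U, x e := by
              rw [Finset.mul_sum]
              exact Finset.sum_congr rfl fun e _ => by simp [smul_eq_mul]
            rw [hsum, inv_mul_le_iff₀ hrpos]
            have := h1 U
            rw [hg₁def] at this
            push_cast at this
            exact this
          · rw [smul_smul, mul_inv_cancel₀ (ne_of_gt hrpos), one_smul]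
        · refine ⟨(fun i => (w i:ℝ)) - x, ?_, ?_⟩
          · refine Set.mem_smul_set.mpr
              ⟨((k - r : ℕ):ℝ)⁻¹ • ((fun i => (w i:ℝ)) - x), ?_, ?_⟩
            · intro U
              have hsum : ∑ e ∈ U, (((k - r : ℕ):ℝ)⁻¹ • ((fun i => (w i:ℝ)) - x)) e
                  = ((k - r : ℕ):ℝ)⁻¹ * (∑ e ∈ U, (w e : ℝ) - ∑ e ∈ U, x e) := by
                rw [← Finset.sum_sub_distrib, Finset.mul_sum]
                exact Finset.sum_congr rfl fun e _ => by simp [smul_eq_mul, mul_sub]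
              rw [hsum, inv_mul_le_iff₀ hspos]
              have := h2 U
              rw [hg₂def] at this
              push_cast at this
              linarith
            · rw [smul_smul, mul_inv_cancel₀ (ne_of_gt hspos), one_smul]
          · funext i
            simp
    rw [hXeq]
    have hg₁sub : ∀ A B : Finset E, g₁ (A ∪ B) + g₁ (A ∩ B) ≤ g₁ A + g₁ B := by
      intro A B
      simp only [hg₁def]
      have h0 : (0:ℤ) ≤ (r:ℤ) := Int.natCast_nonneg r
      have := mul_le_mul_of_nonneg_left (hf A B) h0
      linarith [this]
    have hg₂sup : ∀ A B : Finset E, g₂ A + g₂ B ≤ g₂ (A ∪ B) + g₂ (A ∩ B) := by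
      intro A B
      simp only [hg₂def]
      have h0 : (0:ℤ) ≤ ((k - r : ℕ):ℤ) := Int.natCast_nonneg _
      have hmul := mul_le_mul_of_nonneg_left (hf A B) h0
      have hw : (∑ e ∈ A ∪ B, w e) + ∑ e ∈ A ∩ B, w e = (∑ e ∈ A, w e) + ∑ e ∈ B, w e :=
        Finset.sum_union_inter
      linarith [hmul, hw]
    refine aux_midpoint (X_convex g₁ g₂ c d) (X_compact g₁ g₂ c d) ?_
    rintro z ⟨hz1, hz2, hz3⟩ hfr
    obtain ⟨z₁, z₂, h1, h2, hne, hmid⟩ :=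
      midpoint_property g₁ g₂ c d z hz1 hz2 hg₁sub hg₂sup hz3 hfr
    exact ⟨z₁, h1, z₂, h2, hne, hmid⟩
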